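/- Let $\mathfrak{g}$ be a finite-dimensional real Lie algebra, $\mathfrak{h}\subset\mathfrak{g}$ a subalgebra, $\lambda$ a character of $\mathfrak{h}$, and $\mathfrak{g}_T=\mathfrak{g}\oplus\mathbb{R}T$ with $T$ central, $\mathfrak{h}^T_\lambda$-ideal generated by $\{X+\lambda(X)T: X\in\mathfrak{h}\}$. If $u_T \in (U(\mathfrak{g}_T)/U(\mathfrak{g}_T)\mathfrak{h}^T_\lambda)^{\mathfrak{h}}$, then the family $t\mapsto u_t := e_{(T=t)}(u_T) \in (U(\mathfrak{g})/U(\mathfrak{g})\mathfrak{h}_{t\lambda})^{\mathfrak{h}}$ is polynomial in $t$, in the sense that under the PBW identifications $(U(\mathfrak{g})/U(\mathfrak{g})\mathfrak{h}_{t\lambda}) \simeq S(\mathfrak{q})$ (for a fixed complement $\mathfrak{q}$ of $\mathfrak{h}$), the coefficients of $u_t$ are polynomial functions of $t$. -/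

import Mathlib

open UniversalEnvelopingAlgebra

noncomputable section

instance gTLieRing (g : Type*) [LieRing g] : LieRing (g × ℝ) where
  bracket x y := (⁅x.1, y.1⁆, 0)
  add_lie x y z := by
    show (⁅x.1 + y.1, z.1⁆, (0 : ℝ)) = (⁅x.1, z.1⁆, (0 : ℝ)) + (⁅y.1, z.1⁆, (0 : ℝ))
    simp [add_lie, Prod.ext_iff]
  lie_add x y z := by
    show (⁅x.1, y.1 + z.1⁆, (0 : ℝ)) = (⁅x.1, y.1⁆, (0 : ℝ)) + (⁅x.1, z.1⁆, (0 : ℝ))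
    simp [lie_add, Prod.ext_iff]
  lie_self x := by
    show (⁅x.1, x.1⁆, (0 : ℝ)) = 0
    simp [Prod.ext_iff]
  leibniz_lie x y z := by
    show (⁅x.1, ⁅y.1, z.1⁆⁆, (0 : ℝ)) =
      (⁅(⁅x.1, y.1⁆, (0 : ℝ)).1, z.1⁆, (0 : ℝ)) + (⁅y.1, ⁅x.1, z.1⁆⁆, (0 : ℝ))
    rw [Prod.mk_add_mk, Prod.mk.injEq]
    exact ⟨leibniz_lie x.1 y.1 z.1, (add_zero 0).symm⟩

instance gTLieAlgebra (g : Type*) [LieRing g] [LieAlgebra ℝ g] : LieAlgebra ℝ (g × ℝ) where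
  lie_smul t x y := by
    show (⁅x.1, t • y.1⁆, (0 : ℝ)) = t • (⁅x.1, y.1⁆, (0 : ℝ))
    simp [Prod.ext_iff]

/-- The left ideal `U(g_T)h^T_λ` generated by `{X + λ(X)T : X ∈ h}`. -/
def envIdealT (g : Type*) [LieRing g] [LieAlgebra ℝ g]
    (h : LieSubalgebra ℝ g) (lam : h →ₗ[ℝ] ℝ) :
    Ideal (UniversalEnvelopingAlgebra ℝ (g × ℝ)) :=
  Ideal.span {a | ∃ X : h, a = ι ℝ (((X : g), 0) : g × ℝ) + lam X • ι ℝ ((0, 1) : g × ℝ)}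

/-- The left ideal `U(g)h_{tλ}` generated by `{X + tλ(X) : X ∈ h}`. -/
def envIdealt (g : Type*) [LieRing g] [LieAlgebra ℝ g]
    (h : LieSubalgebra ℝ g) (lam : h →ₗ[ℝ] ℝ) (t : ℝ) :
    Ideal (UniversalEnvelopingAlgebra ℝ g) :=
  Ideal.span {a | ∃ X : h,
    a = ι ℝ (X : g) + algebraMap ℝ (UniversalEnvelopingAlgebra ℝ g) (t * lam X)}

def monList {g : Type*} [LieRing g] [LieAlgebra ℝ g] {q : Submodule ℝ g} {m : ℕ}
    (bq : Module.Basis (Fin m) ℝ q) (d : Fin m →₀ ℕ) : List (UniversalEnvelopingAlgebra ℝ g) :=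
  (List.finRange m).flatMap fun i => List.replicate (d i) (ι ℝ ((bq i : q) : g))

/-- The symmetrization map `β : S(q) → U(g)`. -/
def symmBeta {g : Type*} [LieRing g] [LieAlgebra ℝ g] {q : Submodule ℝ g} {m : ℕ}
    (bq : Module.Basis (Fin m) ℝ q) :
    MvPolynomial (Fin m) ℝ →ₗ[ℝ] UniversalEnvelopingAlgebra ℝ g :=
  (MvPolynomial.basisMonomials (Fin m) ℝ).constr ℝ fun d =>
    (((monList bq d).length.factorial : ℝ)⁻¹) •
      (((monList bq d).permutations).map List.prod).sum


namespace Stmt12Aux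

attribute [local instance] LieRing.ofAssociativeRing

open UniversalEnvelopingAlgebra

variable {g : Type*} [LieRing g] [LieAlgebra ℝ g]

/-- product of `ι`-images of a list -/
def prodL (L : List g) : UniversalEnvelopingAlgebra ℝ g :=
  (L.map fun x => ι ℝ x).prod

@[simp] lemma prodL_nil : prodL ([] : List g) = 1 := rfl

@[simp] lemma prodL_cons (x : g) (L : List g) : prodL (x :: L) = ι ℝ x * prodL L := by
  simp [prodL]

lemma prodL_append (L M : List g) : prodL (L ++ M) = prodL L * prodL M := by
  simp [prodL]

variable (h : LieSubalgebra ℝ g) (lam : h →ₗ[ℝ] ℝ)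
variable {q : Submodule ℝ g} {m : ℕ} (bq : Module.Basis (Fin m) ℝ q)

def evalAt (t : ℝ) (c : (Fin m →₀ ℕ) →₀ Polynomial ℝ) : MvPolynomial (Fin m) ℝ :=
  c.sum fun d p => MvPolynomial.monomial d (Polynomial.eval t p)

def QQ (f : ℝ → UniversalEnvelopingAlgebra ℝ g) : Prop :=
  ∃ c : (Fin m →₀ ℕ) →₀ Polynomial ℝ,
    ∀ t, f t - symmBeta bq (evalAt t c) ∈ envIdealt g h lam t

variable {h lam bq}

lemma rsmul_mem_ideal {I : Ideal (UniversalEnvelopingAlgebra ℝ g)} (r : ℝ)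
    {x : UniversalEnvelopingAlgebra ℝ g} (hx : x ∈ I) : r • x ∈ I := by
  rw [Algebra.smul_def]; exact I.mul_mem_left _ hx

lemma evalAt_add (t : ℝ) (c₁ c₂ : (Fin m →₀ ℕ) →₀ Polynomial ℝ) :
    evalAt t (c₁ + c₂) = evalAt t c₁ + evalAt t c₂ := by
  classical
  exact Finsupp.sum_add_index' (fun d => by simp) (fun d p₁ p₂ => by simp [map_add])

lemma QQ_ext {f f' : ℝ → UniversalEnvelopingAlgebra ℝ g} (hf : ∀ t, f t = f' t)
    (H : QQ h lam bq f) : QQ h lam bq f' := by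
  obtain ⟨c, hc⟩ := H
  exact ⟨c, fun t => by rw [← hf t]; exact hc t⟩

lemma QQ_zero : QQ h lam bq (fun _ => (0 : UniversalEnvelopingAlgebra ℝ g)) := by
  refine ⟨0, fun t => ?_⟩
  simp [evalAt, envIdealt]

lemma QQ_add {f f' : ℝ → UniversalEnvelopingAlgebra ℝ g}
    (H : QQ h lam bq f) (H' : QQ h lam bq f') : QQ h lam bq (fun t => f t + f' t) := by
  obtain ⟨c, hc⟩ := H
  obtain ⟨c', hc'⟩ := H'
  refine ⟨c + c', fun t => ?_⟩
  rw [evalAt_add, map_add]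
  have : f t + f' t - (symmBeta bq (evalAt t c) + symmBeta bq (evalAt t c')) =
      (f t - symmBeta bq (evalAt t c)) + (f' t - symmBeta bq (evalAt t c')) := by abel
  rw [this]
  exact add_mem (hc t) (hc' t)

lemma QQ_polyscale {f : ℝ → UniversalEnvelopingAlgebra ℝ g} (p : Polynomial ℝ)
    (H : QQ h lam bq f) : QQ h lam bq (fun t => p.eval t • f t) := by
  classical
  obtain ⟨c, hc⟩ := H
  refine ⟨c.mapRange (fun pd => p * pd) (mul_zero p), fun t => ?_⟩
  have he : evalAt t (c.mapRange (fun pd => p * pd) (mul_zero p)) = p.eval t • evalAt t c := by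
    rw [evalAt, Finsupp.sum_mapRange_index (fun d => by simp)]
    rw [evalAt, Finsupp.smul_sum]
    exact Finsupp.sum_congr fun d _ => by
      simp [Polynomial.eval_mul, MvPolynomial.smul_monomial]
  rw [he, map_smul, ← smul_sub]
  exact rsmul_mem_ideal _ (hc t)

lemma QQ_rsmul {f : ℝ → UniversalEnvelopingAlgebra ℝ g} (r : ℝ)
    (H : QQ h lam bq f) : QQ h lam bq (fun t => r • f t) := by
  have := QQ_polyscale (Polynomial.C r) H
  exact QQ_ext (fun t => by simp) this

lemma QQ_neg {f : ℝ → UniversalEnvelopingAlgebra ℝ g}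
    (H : QQ h lam bq f) : QQ h lam bq (fun t => -f t) := by
  have := QQ_rsmul (-1 : ℝ) H
  exact QQ_ext (fun t => by simp) this

lemma QQ_sub {f f' : ℝ → UniversalEnvelopingAlgebra ℝ g}
    (H : QQ h lam bq f) (H' : QQ h lam bq f') : QQ h lam bq (fun t => f t - f' t) := by
  have := QQ_add H (QQ_neg H')
  exact QQ_ext (fun t => by abel) this

lemma QQ_ofIdeal {f : ℝ → UniversalEnvelopingAlgebra ℝ g}
    (H : ∀ t, f t ∈ envIdealt g h lam t) : QQ h lam bq f := by
  refine ⟨0, fun t => ?_⟩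
  simpa [evalAt] using H t

lemma QQ_finsetSum {α : Type*} (s : Finset α) (f : α → ℝ → UniversalEnvelopingAlgebra ℝ g)
    (hf : ∀ a ∈ s, QQ h lam bq (f a)) :
    QQ h lam bq (fun t => ∑ a ∈ s, f a t) := by
  classical
  induction s using Finset.induction_on with
  | empty => exact QQ_ext (fun t => by simp) QQ_zero
  | insert a s hnot ih =>
    have := QQ_add (hf a (Finset.mem_insert_self a s))
      (ih fun b hb => hf b (Finset.mem_insert_of_mem hb))
    exact QQ_ext (fun t => by rw [Finset.sum_insert hnot]) this

lemma QQ_const_span {s : Set (UniversalEnvelopingAlgebra ℝ g)}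
    (hs : ∀ a ∈ s, QQ h lam bq (fun _ => a)) :
    ∀ x ∈ Submodule.span ℝ s, QQ h lam bq (fun _ => x) := by
  intro x hx
  induction hx using Submodule.span_induction with
  | mem a ha => exact hs a ha
  | zero => exact QQ_zero
  | add a b _ _ ha hb => exact QQ_ext (fun t => rfl) (QQ_add ha hb)
  | smul r a _ ha => exact QQ_ext (fun t => rfl) (QQ_rsmul r ha)

/-- Span of products of at most `k` generators. -/
def Wle (k : ℕ) : Submodule ℝ (UniversalEnvelopingAlgebra ℝ g) :=
  Submodule.span ℝ {x | ∃ M : List g, M.length ≤ k ∧ x = prodL M}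

lemma Wle_mono {k k' : ℕ} (hk : k ≤ k') : (Wle k : Submodule ℝ (UniversalEnvelopingAlgebra ℝ g)) ≤ Wle k' := by
  apply Submodule.span_mono
  rintro x ⟨M, hM, rfl⟩
  exact ⟨M, hM.trans hk, rfl⟩

lemma mul_ι_Wle (z : g) {k : ℕ} {a : UniversalEnvelopingAlgebra ℝ g} (ha : a ∈ Wle k) :
    ι ℝ z * a ∈ Wle (k + 1) := by
  induction ha using Submodule.span_induction with
  | mem x hx =>
    obtain ⟨M, hM, rfl⟩ := hx
    exact Submodule.subset_span ⟨z :: M, by simpa using hM, (prodL_cons z M).symm⟩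
  | zero => simpa using Submodule.zero_mem _
  | add x y _ _ hx hy => rw [mul_add]; exact add_mem hx hy
  | smul r x _ hx => rw [mul_smul_comm]; exact Submodule.smul_mem _ r hx

lemma exists_map_of_forall_mem (l : List (UniversalEnvelopingAlgebra ℝ g))
    (hl : ∀ x ∈ l, ∃ z : g, x = ι ℝ z) : ∃ M : List g, l = M.map fun z => ι ℝ z := by
  induction l with
  | nil => exact ⟨[], rfl⟩
  | cons x l ih =>
    obtain ⟨z, hz⟩ := hl x List.mem_cons_self
    obtain ⟨M, hM⟩ := ih fun y hy => hl y (List.mem_cons_of_mem _ hy)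
    exact ⟨z :: M, by simp [hz, hM]⟩

lemma prod_sub_prod_mem {P P' : List (UniversalEnvelopingAlgebra ℝ g)} (hp : P.Perm P')
    (hP : ∀ x ∈ P, ∃ z : g, x = ι ℝ z) :
    P.prod - P'.prod ∈ Wle (P.length - 1) := by
  induction hp with
  | nil => simpa using Submodule.zero_mem _
  | @cons x l₁ l₂ p ih =>
    rcases l₁ with _ | ⟨y, l₁⟩
    · have : l₂ = [] := p.symm.eq_nil
      subst this
      simpa using Submodule.zero_mem _
    · have hx : ∃ z : g, x = ι ℝ z := hP x List.mem_cons_self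
      obtain ⟨z, rfl⟩ := hx
      have ihm := ih fun u hu => hP u (List.mem_cons_of_mem _ hu)
      have : ι ℝ z * ((y :: l₁).prod - l₂.prod) ∈ Wle ((y :: l₁).length - 1 + 1) :=
        mul_ι_Wle z ihm
      rw [mul_sub] at this
      simpa using this
  | swap x y l =>
    obtain ⟨a, ha⟩ := hP y List.mem_cons_self
    obtain ⟨b, hb⟩ := hP x (List.mem_cons_of_mem _ List.mem_cons_self)
    obtain ⟨M, hM⟩ := exists_map_of_forall_mem l fun u hu =>
      hP u (List.mem_cons_of_mem _ (List.mem_cons_of_mem _ hu))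
    have key : (y :: x :: l).prod - (x :: y :: l).prod = prodL (⁅a, b⁆ :: M) := by
      have hbr : ι ℝ ⁅a, b⁆ = ι ℝ a * ι ℝ b - ι ℝ b * ι ℝ a := by
        rw [LieHom.map_lie, Ring.lie_def]
      simp only [List.prod_cons, prodL_cons, hbr, ha, hb, hM]
      rw [sub_mul, mul_assoc, mul_assoc]
      rfl
    rw [key]
    refine Submodule.subset_span ⟨⁅a, b⁆ :: M, ?_, rfl⟩
    have : l.length = M.length := by rw [hM, List.length_map]
    simp [← this]
  | @trans l₁ l₂ l₃ p₁ p₂ ih₁ ih₂ =>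
    have h₂ : ∀ x ∈ l₂, ∃ z : g, x = ι ℝ z := fun x hx => hP x (p₁.mem_iff.mpr hx)
    have e : l₂.length = l₁.length := p₁.length_eq.symm
    have := add_mem (ih₁ hP) (by rw [← e] at *; exact ih₂ h₂)
    simpa using this

lemma QQ_Wle {n : ℕ} (IH : ∀ L : List g, L.length ≤ n → QQ h lam bq fun _ => prodL L)
    {x : UniversalEnvelopingAlgebra ℝ g} (hx : x ∈ Wle n) : QQ h lam bq fun _ => x :=
  QQ_const_span (fun a ha => by obtain ⟨M, hM, rfl⟩ := ha; exact IH M hM) x hx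

lemma symmBeta_monomial (d : Fin m →₀ ℕ) :
    symmBeta bq (MvPolynomial.monomial d 1) =
      (((monList bq d).length.factorial : ℝ)⁻¹) •
        (((monList bq d).permutations).map List.prod).sum := by
  have hb : (MvPolynomial.monomial d (1 : ℝ)) = (MvPolynomial.basisMonomials (Fin m) ℝ) d := by
    rw [MvPolynomial.coe_basisMonomials]
  rw [hb, symmBeta, Module.Basis.constr_basis]

lemma QQ_beta (d : Fin m →₀ ℕ) :
    QQ h lam bq fun _ => symmBeta bq (MvPolynomial.monomial d (1 : ℝ)) := by
  refine ⟨Finsupp.single d 1, fun t => ?_⟩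
  have he : evalAt t (Finsupp.single d (1 : Polynomial ℝ)) = MvPolynomial.monomial d 1 := by
    rw [evalAt, Finsupp.sum_single_index (by simp)]; simp
  rw [he, sub_self]; exact Submodule.zero_mem _

def cnt (L : List (Fin m)) : Fin m →₀ ℕ := Finsupp.equivFunOnFinite.symm fun i => L.count i

def idxList (d : Fin m →₀ ℕ) : List (Fin m) :=
  (List.finRange m).flatMap fun i => List.replicate (d i) i

lemma monList_eq (d : Fin m →₀ ℕ) :
    monList bq d = (idxList d).map fun i => ι ℝ ((bq i : q) : g) := by
  simp [monList, idxList, List.map_flatMap, List.map_replicate]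

lemma idxList_perm (L : List (Fin m)) : (idxList (cnt L)).Perm L := by
  classical
  rw [List.perm_iff_count]
  intro j
  rw [idxList, List.count_flatMap]
  have h1 : List.map (List.count j ∘ fun i => List.replicate ((cnt L) i) i) (List.finRange m)
      = List.map (fun i => if i = j then L.count j else 0) (List.finRange m) := by
    apply List.map_congr_left
    intro i _
    by_cases hij : i = j
    · subst hij; simp [List.count_replicate, cnt]
    · simp [Function.comp, List.count_replicate, cnt, hij]
  rw [h1, ← Fin.sum_univ_def]
  simp

lemma sum_map_const_sub {α : Type*} {M : Type*} [AddCommGroup M] (l : List α) (a : M)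
    (f : α → M) : (l.map fun x => a - f x).sum = l.length • a - (l.map f).sum := by
  induction l with
  | nil => simp
  | cons x l ih =>
    simp only [List.map_cons, List.sum_cons, List.length_cons, ih, succ_nsmul]
    abel

lemma step_idx {n : ℕ} (IH : ∀ L : List g, L.length ≤ n → QQ h lam bq fun _ => prodL L)
    (L : List (Fin m)) (hL : L.length ≤ n + 1) :
    QQ h lam bq fun _ => prodL (L.map fun i => ((bq i : q) : g)) := by
  classical
  set d := cnt L with hd
  set ML := monList bq d with hML
  set a := prodL (L.map fun i => ((bq i : q) : g)) with hadef
  have hMLlen : ML.length = L.length := by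
    rw [hML, monList_eq, List.length_map, hd]
    exact (idxList_perm L).length_eq
  have hperm : ∀ p ∈ ML.permutations, a - p.prod ∈ Wle n := by
    intro p hp
    have h1 : p.Perm ((L.map fun i => ((bq i : q) : g)).map fun z => ι ℝ z) := by
      refine (List.mem_permutations.mp hp).trans ?_
      rw [hML, hd, monList_eq]
      have h2 := (idxList_perm L).map fun i => ι ℝ ((bq i : q) : g)
      simpa [List.map_map, Function.comp_def] using h2
    have hPmem : ∀ x ∈ p, ∃ z : g, x = ι ℝ z := by
      intro x hx
      obtain ⟨i, _, rfl⟩ := List.mem_map.mp (h1.mem_iff.mp hx)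
      exact ⟨i, rfl⟩
    have h3 := prod_sub_prod_mem h1 hPmem
    have h4 : ((L.map fun i => ((bq i : q) : g)).map fun z => ι ℝ z).prod = a := rfl
    rw [h4] at h3
    have h5 : p.length - 1 ≤ n := by
      have := h1.length_eq
      simp only [List.length_map] at this
      omega
    have h6 := Wle_mono h5 h3
    have : a - p.prod = -(p.prod - a) := by abel
    rw [this]
    exact neg_mem h6
  have hfact : ((ML.length.factorial : ℝ))⁻¹ * (ML.length.factorial : ℝ) = 1 :=
    inv_mul_cancel₀ (by exact_mod_cast ML.length.factorial_ne_zero)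
  have key : symmBeta bq (MvPolynomial.monomial d 1) +
      ((ML.length.factorial : ℝ)⁻¹) • (ML.permutations.map fun p => a - p.prod).sum = a := by
    rw [symmBeta_monomial, ← hML, sum_map_const_sub, List.length_permutations, ← smul_add]
    have h7 : (ML.permutations.map List.prod).sum +
        (ML.length.factorial • a - (ML.permutations.map List.prod).sum)
        = ML.length.factorial • a := by abel
    rw [h7, ← Nat.cast_smul_eq_nsmul ℝ, smul_smul, hfact, one_smul]
  have hsum : (ML.permutations.map fun p => a - p.prod).sum ∈ Wle n := by
    refine list_sum_mem ?_
    intro x hx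
    obtain ⟨p, hp, rfl⟩ := List.mem_map.mp hx
    exact hperm p hp
  have hQ := QQ_add (QQ_beta d) (QQ_rsmul ((ML.length.factorial : ℝ))⁻¹ (QQ_Wle IH hsum))
  exact QQ_ext (fun t => key) hQ

lemma ideal_gen_mem (t : ℝ) (w : h) (u : UniversalEnvelopingAlgebra ℝ g) :
    u * (ι ℝ (w : g) + algebraMap ℝ (UniversalEnvelopingAlgebra ℝ g) (t * lam w))
      ∈ envIdealt g h lam t :=
  Ideal.mul_mem_left _ u (Ideal.subset_span ⟨w, rfl⟩)

lemma step_peel {n : ℕ} (IH : ∀ L : List g, L.length ≤ n → QQ h lam bq fun _ => prodL L)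
    (A : List g) (w : h) (hA : A.length ≤ n) :
    QQ h lam bq fun _ => prodL A * ι ℝ (w : g) := by
  have h1 : QQ h lam bq fun t =>
      prodL A * (ι ℝ (w : g) + algebraMap ℝ (UniversalEnvelopingAlgebra ℝ g) (t * lam w)) :=
    QQ_ofIdeal fun t => ideal_gen_mem t w (prodL A)
  have h2 : QQ h lam bq fun t =>
      ((Polynomial.C (-lam w) * Polynomial.X).eval t) • prodL A :=
    QQ_polyscale _ (IH A hA)
  refine QQ_ext (fun t => ?_) (QQ_add h1 h2)
  rw [mul_add, Polynomial.eval_mul, Polynomial.eval_C, Polynomial.eval_X]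
  have h3 : prodL A * algebraMap ℝ (UniversalEnvelopingAlgebra ℝ g) (t * lam w)
      = (t * lam w) • prodL A := by
    rw [Algebra.smul_def, ← Algebra.commutes]
  rw [h3, show (-lam w * t) = -(t * lam w) by ring, neg_smul]
  abel

/-- coercion of a list in `q` to a list in `g` -/
def coeL (B : List q) : List g := B.map Subtype.val

@[simp] lemma coeL_nil : coeL ([] : List q) = [] := rfl

@[simp] lemma coeL_cons (v : q) (B : List q) : coeL (v :: B) = (v : g) :: coeL B := rfl

@[simp] lemma coeL_length (B : List q) : (coeL B).length = B.length := List.length_map _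

lemma step_T' {n : ℕ} (IH : ∀ L : List g, L.length ≤ n → QQ h lam bq fun _ => prodL L) :
    ∀ (B : List q) (A : List g) (w : h), A.length + B.length + 1 ≤ n + 1 →
      QQ h lam bq fun _ => prodL A * ι ℝ (w : g) * prodL (coeL B) := by
  intro B
  induction B with
  | nil =>
    intro A w hlen
    simp only [List.length_nil] at hlen
    have := step_peel IH A w (by omega)
    exact QQ_ext (fun t => by simp) this
  | cons v B ih =>
    intro A w hlen
    have hlen' : (A ++ [(v : g)]).length + B.length + 1 ≤ n + 1 := by
      simp only [List.length_append, List.length_cons, List.length_nil] at hlen ⊢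
      omega
    have t1 := ih (A ++ [(v : g)]) w hlen'
    have hlen'' : (A ++ (⁅(w : g), (v : g)⁆ :: coeL B)).length ≤ n := by
      simp only [List.length_append, List.length_cons, List.length_nil, coeL_length] at hlen ⊢
      omega
    have t2 := IH (A ++ (⁅(w : g), (v : g)⁆ :: coeL B)) hlen''
    refine QQ_ext (fun t => ?_) (QQ_add t1 t2)
    have hbr : ι ℝ ⁅(w : g), (v : g)⁆
        = ι ℝ (w : g) * ι ℝ (v : g) - ι ℝ (v : g) * ι ℝ (w : g) := by
      rw [LieHom.map_lie, Ring.lie_def]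
    simp only [prodL_append, prodL_cons, prodL_nil, coeL_cons, hbr, mul_one]
    noncomm_ring

/-- Multiplying a span of index-words by a basis generator. -/
lemma mul_ι_span_idx (z : Fin m) (k : ℕ) {a : UniversalEnvelopingAlgebra ℝ g}
    (ha : a ∈ Submodule.span ℝ {x | ∃ L : List (Fin m), L.length = k ∧
      x = prodL (L.map fun i => ((bq i : q) : g))}) :
    ι ℝ ((bq z : q) : g) * a ∈ Submodule.span ℝ {x | ∃ L : List (Fin m), L.length = k + 1 ∧
      x = prodL (L.map fun i => ((bq i : q) : g))} := by
  induction ha using Submodule.span_induction with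
  | mem x hx =>
    obtain ⟨L, hL, rfl⟩ := hx
    exact Submodule.subset_span ⟨z :: L, by simpa using hL, by simp⟩
  | zero => simpa using Submodule.zero_mem _
  | add x y _ _ hx hy => rw [mul_add]; exact add_mem hx hy
  | smul r x _ hx => rw [mul_smul_comm]; exact Submodule.smul_mem _ r hx

lemma pureq_span (B : List q) :
    prodL (coeL B) ∈ Submodule.span ℝ
      {x | ∃ L : List (Fin m), L.length = B.length ∧
        x = prodL (L.map fun i => ((bq i : q) : g))} := by
  induction B with
  | nil => exact Submodule.subset_span ⟨[], rfl, rfl⟩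
  | cons v B ih =>
    have hv : ((v : q) : g) = ∑ i, bq.repr v i • ((bq i : q) : g) := by
      conv_lhs => rw [← bq.sum_repr v]
      rw [Submodule.coe_sum]; simp only [Submodule.coe_smul]
    rw [coeL_cons, prodL_cons, hv]
    have hsum : ι ℝ (∑ i, bq.repr v i • ((bq i : q) : g))
        = ∑ i, bq.repr v i • ι ℝ ((bq i : q) : g) :=
      map_sum ((ι ℝ).toLinearMap : g →ₗ[ℝ] UniversalEnvelopingAlgebra ℝ g)
        (fun i => bq.repr v i • ((bq i : q) : g)) Finset.univ |>.trans
        (by simp)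
    rw [hsum, Finset.sum_mul]
    refine Submodule.sum_mem _ fun i _ => ?_
    rw [smul_mul_assoc]
    refine Submodule.smul_mem _ _ ?_
    simpa using mul_ι_span_idx i B.length ih

lemma step_pureq {n : ℕ} (IH : ∀ L : List g, L.length ≤ n → QQ h lam bq fun _ => prodL L)
    (B : List q) (hB : B.length ≤ n + 1) :
    QQ h lam bq fun _ => prodL (coeL B) := by
  refine QQ_const_span ?_ _ (pureq_span (bq := bq) B)
  rintro a ⟨L, hL, rfl⟩
  exact step_idx IH L (by omega)

lemma step_tagged {n : ℕ} (IH : ∀ L : List g, L.length ≤ n → QQ h lam bq fun _ => prodL L) :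
    ∀ l : List g, ∀ B : List q,
      (∀ x ∈ l, x ∈ (h : Submodule ℝ g) ∨ x ∈ q) → l.length + B.length ≤ n + 1 →
      QQ h lam bq fun _ => prodL l * prodL (coeL B) := by
  intro l
  induction l using List.reverseRecOn with
  | nil =>
    intro B htag hlen
    exact QQ_ext (fun t => by simp) (step_pureq IH B (by simpa using hlen))
  | append_singleton l x ih =>
    intro B htag hlen
    rcases htag x (by simp) with hx | hx
    · have hxh : x ∈ h := hx
      have := step_T' IH B l ⟨x, hxh⟩
        (by simp only [List.length_append, List.length_cons, List.length_nil] at hlen ⊢; omega)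
      refine QQ_ext (fun t => ?_) this
      rw [prodL_append]
      simp [mul_assoc]
    · have := ih (⟨x, hx⟩ :: B) (fun y hy => htag y (by simp [hy]))
        (by simp only [List.length_append, List.length_cons, List.length_nil] at hlen ⊢; omega)
      refine QQ_ext (fun t => ?_) this
      rw [coeL_cons, prodL_cons, prodL_append]
      simp [mul_assoc]

lemma mul_tagged_span (y : g) (hy : y ∈ (h : Submodule ℝ g) ∨ y ∈ q) (k : ℕ)
    {a : UniversalEnvelopingAlgebra ℝ g}
    (ha : a ∈ Submodule.span ℝ {x | ∃ l : List g, l.length = k ∧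
      (∀ u ∈ l, u ∈ (h : Submodule ℝ g) ∨ u ∈ q) ∧ x = prodL l}) :
    ι ℝ y * a ∈ Submodule.span ℝ {x | ∃ l : List g, l.length = k + 1 ∧
      (∀ u ∈ l, u ∈ (h : Submodule ℝ g) ∨ u ∈ q) ∧ x = prodL l} := by
  induction ha using Submodule.span_induction with
  | mem x hx =>
    obtain ⟨l, hl, htag, rfl⟩ := hx
    refine Submodule.subset_span ⟨y :: l, by simpa using hl, ?_, by simp⟩
    intro u hu
    rcases List.mem_cons.mp hu with rfl | hu
    · exact hy
    · exact htag u hu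
  | zero => simpa using Submodule.zero_mem _
  | add x y' _ _ hx hy' => rw [mul_add]; exact add_mem hx hy'
  | smul r x _ hx => rw [mul_smul_comm]; exact Submodule.smul_mem _ r hx

lemma expand_span (hcompl : IsCompl (h : Submodule ℝ g) q) (L : List g) :
    prodL L ∈ Submodule.span ℝ {a | ∃ l : List g, l.length = L.length ∧
      (∀ x ∈ l, x ∈ (h : Submodule ℝ g) ∨ x ∈ q) ∧ a = prodL l} := by
  induction L with
  | nil => exact Submodule.subset_span ⟨[], rfl, by simp, rfl⟩
  | cons x L ih =>
    have hx : x ∈ (h : Submodule ℝ g) ⊔ q := by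
      rw [hcompl.sup_eq_top]; trivial
    obtain ⟨y, hy, z, hz, hyz⟩ := Submodule.mem_sup.mp hx
    rw [prodL_cons, ← hyz, map_add, add_mul]
    refine add_mem ?_ ?_
    · simpa using mul_tagged_span y (Or.inl hy) L.length ih
    · simpa using mul_tagged_span z (Or.inr hz) L.length ih

lemma monList_zero : monList bq (0 : Fin m →₀ ℕ) = [] := by
  simp [monList_eq, idxList]

lemma main_induction (hcompl : IsCompl (h : Submodule ℝ g) q) :
    ∀ n : ℕ, ∀ L : List g, L.length ≤ n → QQ h lam bq fun _ => prodL L := by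
  intro n
  induction n with
  | zero =>
    intro L hL
    have hnil : L = [] := List.length_eq_zero_iff.mp (Nat.le_zero.mp hL)
    subst hnil
    have h1 : symmBeta bq (MvPolynomial.monomial (0 : Fin m →₀ ℕ) (1 : ℝ)) = 1 := by
      rw [symmBeta_monomial, monList_zero]
      simp
    exact QQ_ext (fun t => by rw [h1, prodL_nil]) (QQ_beta 0)
  | succ n IH =>
    intro L hL
    refine QQ_const_span ?_ _ (expand_span hcompl L)
    rintro a ⟨l, hlen, htag, rfl⟩
    have := step_tagged IH l [] htag (by simp only [List.length_nil, Nat.add_zero, hlen]; exact hL)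
    exact QQ_ext (fun t => by simp) this

set_option synthInstance.maxHeartbeats 1000000 in
lemma mem_span_words (a : UniversalEnvelopingAlgebra ℝ g) :
    a ∈ Submodule.span ℝ {x : UniversalEnvelopingAlgebra ℝ g | ∃ L : List g, x = prodL L} := by
  classical
  set A := Algebra.adjoin ℝ (Set.range fun z : g => ι ℝ z) with hA
  have hmemA : a ∈ A := by
    let f₀ : g →ₗ⁅ℝ⁆ A :=
      { toFun := fun x => ⟨ι ℝ x, Algebra.subset_adjoin (Set.mem_range_self x)⟩
        map_add' := fun x y => Subtype.ext (by simp)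
        map_smul' := fun r x => Subtype.ext (by simp)
        map_lie' := fun {x y} => Subtype.ext (by
          show ι ℝ ⁅x, y⁆ = _
          rw [LieHom.map_lie, Ring.lie_def]
          rfl) }
    have hcomp : (A.val.comp (lift ℝ f₀)) = AlgHom.id ℝ (UniversalEnvelopingAlgebra ℝ g) := by
      apply UniversalEnvelopingAlgebra.hom_ext
      apply LieHom.ext
      intro x
      show A.val ((lift ℝ f₀) (ι ℝ x)) = ι ℝ x
      rw [lift_ι_apply]
      rfl
    have : A.val ((lift ℝ f₀) a) = a := by
      have := congrArg (fun ψ => ψ a) hcomp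
      simpa using this
    rw [← this]
    exact ((lift ℝ f₀) a).2
  have hsub : a ∈ Submodule.span ℝ (Submonoid.closure (Set.range fun z : g => ι ℝ z) :
      Set (UniversalEnvelopingAlgebra ℝ g)) := by
    rw [← Algebra.adjoin_eq_span]
    exact (Subalgebra.mem_toSubmodule A).mpr hmemA
  refine Submodule.span_le.mpr ?_ hsub
  intro x hx
  obtain ⟨l, hl, hprod⟩ := Submonoid.exists_list_of_mem_closure hx
  obtain ⟨M, hM⟩ := exists_map_of_forall_mem l fun y hy => by
    obtain ⟨z, hz⟩ := hl y hy
    exact ⟨z, hz.symm⟩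
  exact Submodule.subset_span ⟨M, by rw [← hprod, hM]; rfl⟩

lemma QQ_const (hcompl : IsCompl (h : Submodule ℝ g) q)
    (a : UniversalEnvelopingAlgebra ℝ g) : QQ h lam bq fun _ => a := by
  refine QQ_const_span ?_ _ (mem_span_words a)
  rintro b ⟨L, rfl⟩
  exact main_induction hcompl L.length L le_rfl

set_option maxHeartbeats 1000000 in
variable (g) in
/-- The Lie algebra map `g × ℝ → U(g)[X]`, `(x, s) ↦ ι x + s X`. -/
def liftT : (g × ℝ) →ₗ⁅ℝ⁆ Polynomial (UniversalEnvelopingAlgebra ℝ g) where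
  toFun x := Polynomial.C (ι ℝ x.1) + x.2 • Polynomial.X
  map_add' x y := by
    show Polynomial.C (ι ℝ (x.1 + y.1)) + (x.2 + y.2) • Polynomial.X = _
    rw [map_add, map_add, add_smul]
    abel
  map_smul' r x := by
    show Polynomial.C (ι ℝ (r • x.1)) + (r * x.2) • Polynomial.X
      = r • (Polynomial.C (ι ℝ x.1) + x.2 • Polynomial.X)
    rw [map_smul, mul_smul, smul_add, Polynomial.smul_C]
  map_lie' {x y} := by
    show Polynomial.C (ι ℝ ⁅x.1, y.1⁆) + (0 : ℝ) • Polynomial.X = _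
    rw [zero_smul, add_zero, LieHom.map_lie, Ring.lie_def, map_sub, map_mul, map_mul,
      Ring.lie_def]
    simp only [mul_add, add_mul, smul_mul_assoc, mul_smul_comm, Polynomial.X_mul, smul_add,
      smul_smul, mul_comm y.2 x.2]
    abel

/-- Evaluation `U(g)[X] → U(g)` at the central element `t·1`. -/
def evalT (t : ℝ) :
    Polynomial (UniversalEnvelopingAlgebra ℝ g) →ₐ[ℝ] UniversalEnvelopingAlgebra ℝ g :=
  Polynomial.eval₂AlgHom (AlgHom.id ℝ _) (algebraMap ℝ _ t)
    fun a => show Commute _ _ from (Algebra.commutes t a).symm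

lemma phi_eq (t : ℝ)
    (φ : UniversalEnvelopingAlgebra ℝ (g × ℝ) →ₐ[ℝ] UniversalEnvelopingAlgebra ℝ g)
    (hφ : ∀ (x : g) (s : ℝ), φ (ι ℝ ((x, s) : g × ℝ)) =
      ι ℝ x + algebraMap ℝ (UniversalEnvelopingAlgebra ℝ g) (s * t)) :
    φ = (evalT t).comp (lift ℝ (liftT g)) := by
  apply UniversalEnvelopingAlgebra.hom_ext
  apply LieHom.ext
  intro x
  show φ (ι ℝ x) = (evalT t) ((lift ℝ (liftT g)) (ι ℝ x))
  rw [lift_ι_apply]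
  show φ (ι ℝ x) = (evalT t) (Polynomial.C (ι ℝ x.1) + x.2 • Polynomial.X)
  rw [map_add, map_smul]
  have h1 : (evalT (g := g) t) (Polynomial.C (ι ℝ x.1)) = ι ℝ x.1 := by
    simp [evalT]
  have h2 : (evalT (g := g) t) Polynomial.X
      = algebraMap ℝ (UniversalEnvelopingAlgebra ℝ g) t := by
    simp [evalT]
  rw [h1, h2]
  have h3 : x.2 • algebraMap ℝ (UniversalEnvelopingAlgebra ℝ g) t
      = algebraMap ℝ (UniversalEnvelopingAlgebra ℝ g) (x.2 * t) := by
    rw [map_mul, ← Algebra.smul_def]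
  rw [h3, ← hφ x.1 x.2]

lemma QQ_F (hcompl : IsCompl (h : Submodule ℝ g) q)
    (uT : UniversalEnvelopingAlgebra ℝ (g × ℝ)) :
    QQ h lam bq fun t => evalT t ((lift ℝ (liftT g)) uT) := by
  classical
  set P := (lift ℝ (liftT g)) uT with hP
  have key : ∀ t, evalT t P
      = ∑ j ∈ P.support, ((Polynomial.X ^ j : Polynomial ℝ).eval t) • P.coeff j := by
    intro t
    rw [evalT, Polynomial.eval₂AlgHom_apply, Polynomial.eval₂_eq_sum, Polynomial.sum_def]
    refine Finset.sum_congr rfl fun j _ => ?_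
    rw [← map_pow]
    show P.coeff j * algebraMap ℝ _ (t ^ j) = _
    rw [← Algebra.commutes, ← Algebra.smul_def]
    simp
  refine QQ_ext (fun t => (key t).symm) ?_
  refine QQ_finsetSum _ _ fun j _ => ?_
  exact QQ_polyscale (Polynomial.X ^ j) (QQ_const hcompl (P.coeff j))

end Stmt12Aux

/-- For `u_T ∈ (U(g_T)/U(g_T)h^T_λ)^h`, the family `t ↦ u_t = e_{(T=t)}(u_T)` is polynomial
in `t`: under the PBW identifications `U(g)/U(g)h_{tλ} ≃ S(q)`, the coefficients of `u_t` are
polynomial functions of `t`. -/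
theorem stmt12 (g : Type*) [LieRing g] [LieAlgebra ℝ g] [Module.Finite ℝ g]
    (h : LieSubalgebra ℝ g) (lam : h →ₗ[ℝ] ℝ) (hlam : ∀ X Y : h, lam ⁅X, Y⁆ = 0)
    (q : Submodule ℝ g) (hcompl : IsCompl (h : Submodule ℝ g) q)
    {m : ℕ} (bq : Module.Basis (Fin m) ℝ q)
    (uT : UniversalEnvelopingAlgebra ℝ (g × ℝ))
    (huT : ∀ H : h, ι ℝ (((H : g), 0) : g × ℝ) * uT - uT * ι ℝ (((H : g), 0) : g × ℝ)
        ∈ envIdealT g h lam) :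
    ∃ c : (Fin m →₀ ℕ) →₀ Polynomial ℝ,
      ∀ t : ℝ,
        ∀ φ : UniversalEnvelopingAlgebra ℝ (g × ℝ) →ₐ[ℝ] UniversalEnvelopingAlgebra ℝ g,
          (∀ (x : g) (s : ℝ), φ (ι ℝ ((x, s) : g × ℝ)) =
              ι ℝ x + algebraMap ℝ (UniversalEnvelopingAlgebra ℝ g) (s * t)) →
          φ uT - symmBeta bq (c.sum fun d p => MvPolynomial.monomial d (Polynomial.eval t p))
            ∈ envIdealt g h lam t := by
  classical
  obtain ⟨c, hc⟩ := Stmt12Aux.QQ_F (h := h) (lam := lam) (bq := bq) hcompl uT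
  refine ⟨c, fun t φ hφ => ?_⟩
  have hφ' : φ = (Stmt12Aux.evalT t).comp (lift ℝ (Stmt12Aux.liftT g)) :=
    Stmt12Aux.phi_eq t φ hφ
  have h1 : φ uT = Stmt12Aux.evalT t ((lift ℝ (Stmt12Aux.liftT g)) uT) := by
    rw [hφ']; rfl
  rw [h1]
  exact hc t
end
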